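/- Let n ≥ 1 and α_0 ∈ F, and consider L(n, α_0) with the form defined by the functional t(f,[p]) = coeff_{n-1}(f−p) − α_0·coeff_0(f−p) (for n ≥ 2; for n = 1, t(f,[p]) = coeff_0(f−p)). The subalgebra W_1 = span_F{ b_i(x^{-k},0), b_i(0,−1), b_i(0,−x^ℓ) : k ≥ 1, 1 ≤ ℓ ≤ n−1, 1 ≤ i ≤ d } is a Lie subalgebra of L(n,α_0) complementary to the diagonal Δ. -/

import Mathlib

noncomputable section ManinCore

open scoped BigOperators
open HahnSeries

variable {F : Type} [Field F] {g : Type} [LieRing g] [LieAlgebra F g] {d n : ℕ}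

/-- A Lie ring viewed as a non-unital non-associative semiring with `*` given by the bracket. -/
def lieMulStruct (g : Type) [LieRing g] : NonUnitalNonAssocSemiring g :=
  { (inferInstance : AddCommMonoid g) with
    mul := fun a b => ⁅a, b⁆
    left_distrib := fun a b c => lie_add a b c
    right_distrib := fun a b c => add_lie a b c
    zero_mul := zero_lie
    mul_zero := lie_zero }

/-- Convolution Lie bracket on `g`-valued formal (Hahn/Laurent) series `g((x))`. -/
def bracketLau (u v : HahnSeries ℤ g) : HahnSeries ℤ g :=
  letI : Mul (HahnSeries ℤ g) := @HahnSeries.instMul ℤ g _ _ _ (lieMulStruct g)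
  u * v

/-- The truncated Lie bracket on `g[x]/x^n g[x]`, represented as `Fin n → g`. -/
def bracketTr (p q : Fin n → g) : Fin n → g :=
  fun m => ∑ i : Fin n, ∑ j : Fin n, if (i : ℕ) + (j : ℕ) = (m : ℕ) then ⁅p i, q j⁆ else 0

/-- The Lie algebra `L(n,α) = g((x)) × g[x]/x^n g[x]` (as an `F`-module). -/
abbrev LL (g : Type) [AddCommGroup g] (n : ℕ) := HahnSeries ℤ g × (Fin n → g)

/-- Componentwise bracket on `L(n,α)`. -/
def bracketLL (z w : LL g n) : LL g n := (bracketLau z.1 w.1, bracketTr z.2 w.2)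

variable (F g n) in
/-- The diagonal `Δ = {(f,[f]) | f ∈ g[[x]]} ⊆ L(n,α)`. -/
def Delta [Module F g] : Submodule F (LL g n) where
  carrier := {z | (∀ k : ℤ, k < 0 → z.1.coeff k = 0) ∧ ∀ m : Fin n, z.2 m = z.1.coeff (m : ℤ)}
  add_mem' := by
    rintro a b ⟨ha1, ha2⟩ ⟨hb1, hb2⟩
    refine ⟨fun k hk => ?_, fun m => ?_⟩
    · simp [HahnSeries.coeff_add, ha1 k hk, hb1 k hk]
    · simp [HahnSeries.coeff_add, ha2 m, hb2 m]
  zero_mem' := by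
    exact ⟨fun k _ => rfl, fun m => rfl⟩
  smul_mem' := by
    rintro c a ⟨ha1, ha2⟩
    refine ⟨fun k hk => ?_, fun m => ?_⟩
    · simp [HahnSeries.coeff_smul, ha1 k hk]
    · simp [HahnSeries.coeff_smul, ha2 m]

/-- Residue-type bilinear pairing on the Laurent part: `res₀(α·κ(u,v))`. -/
def BLau (κ : g →ₗ[F] g →ₗ[F] F) (α : LaurentSeries F) (u v : HahnSeries ℤ g) : F :=
  ∑ᶠ (i : ℤ) (j : ℤ), α.coeff i * κ (u.coeff j) (v.coeff (-1 - i - j))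

/-- Pairing on the truncated part: `res₀(α·κ(p,q))`. -/
def BTr (κ : g →ₗ[F] g →ₗ[F] F) (α : LaurentSeries F) (p q : Fin n → g) : F :=
  ∑ i : Fin n, ∑ j : Fin n, α.coeff (-1 - (i : ℕ) - (j : ℕ)) * κ (p i) (q j)

/-- The bilinear form `B` on `L(n,α)`: `B((f,p),(g,q)) = res₀(α(fg − pq))` (κ-valued). -/
def BB (κ : g →ₗ[F] g →ₗ[F] F) (α : LaurentSeries F) (z w : LL g n) : F :=
  BLau κ α z.1 w.1 - BTr κ α z.2 w.2

variable (g n) in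
/-- The elements `w_{k,i}` from the expansion of `y^nΩ/(x-y)` in `(L(n,α) ⊗ g)[[y]]`. -/
def wElt (b : Fin d → g) (k : ℕ) (i : Fin d) : LL g n :=
  if k < n then (0, fun m => if (m : ℕ) = n - 1 - k then -(b i) else 0)
  else (HahnSeries.single ((n : ℤ) - 1 - k) (b i), 0)

/-- Multiplication of a `g`-valued Laurent series by a scalar power series. -/
def psSmulLau (s : PowerSeries F) (u : HahnSeries ℤ g) : HahnSeries ℤ g :=
  (HahnModule.of F).symm ((HahnSeries.ofPowerSeries ℤ F s) • (HahnModule.of F u))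

/-- Multiplication of a truncated polynomial by a power series. -/
def psSmulTr (s : PowerSeries F) (p : Fin n → g) : Fin n → g :=
  fun m => ∑ j : Fin n, if (j : ℕ) ≤ (m : ℕ) then (PowerSeries.coeff ((m : ℕ) - j)) s • p j else 0

/-- Componentwise multiplication of an element of `L(n,α)` by a power series. -/
def psSmulLL (s : PowerSeries F) (z : LL g n) : LL g n := (psSmulLau s z.1, psSmulTr s z.2)

/-- The diagonal monomial `b_i(y^k, [y^k]) ∈ Δ ⊆ L(n,α)`. -/
def diagMono (b : Fin d → g) (k : ℕ) (i : Fin d) : LL g n :=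
  (HahnSeries.single (k : ℤ) (b i), fun m => if (m : ℕ) = k then b i else 0)

/-- The `g`-valued Hahn series with coefficients `γ : ℕ → g` in nonnegative degrees. -/
def ofNatCoeff (γ : ℕ → g) : HahnSeries ℤ g :=
  HahnSeries.embDomain Nat.castOrderEmbedding
    ⟨γ, Set.IsWF.isPWO ((wellFounded_lt).wellFoundedOn :
      (Function.support γ).WellFoundedOn (· < ·))⟩

/-- The diagonal element of `L(n,α)` corresponding to a formal power series with
basis coefficients `γ : ℕ → Fin d → F` (i.e. `∑ γ ℓ j • b_j x^ℓ`). -/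
def diagOf [Module F g] (b : Fin d → g) (γ : ℕ → Fin d → F) : LL g n :=
  (ofNatCoeff (fun ℓ => ∑ j, γ ℓ j • b j), fun m => ∑ j, γ (m : ℕ) j • b j)



variable (F g n) in
/-- The subspace of `L(n,α)` whose Laurent component has only strictly negative terms. -/
def W1aux : Submodule F (LL g n) where
  carrier := {z | ∀ k : ℤ, 0 ≤ k → z.1.coeff k = 0}
  add_mem' := by
    intro a b ha hb k hk
    simp [HahnSeries.coeff_add, ha k hk, hb k hk]
  zero_mem' := fun k _ => rfl
  smul_mem' := by
    intro c a ha k hk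
    simp [HahnSeries.coeff_smul, ha k hk]

lemma mem_W1aux [Module F g] {z : LL g n} :
    z ∈ W1aux F g n ↔ ∀ k : ℤ, 0 ≤ k → z.1.coeff k = 0 := Iff.rfl

lemma mem_Delta [Module F g] {z : LL g n} :
    z ∈ Delta F g n ↔ (∀ k : ℤ, k < 0 → z.1.coeff k = 0) ∧
      ∀ m : Fin n, z.2 m = z.1.coeff (m : ℤ) := Iff.rfl

lemma ofNatCoeff_coeff_nat (γ : ℕ → g) (m : ℕ) : (ofNatCoeff γ).coeff (m : ℤ) = γ m := by
  have : ((m : ℤ)) = Nat.castOrderEmbedding m := rfl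
  rw [this, ofNatCoeff, HahnSeries.embDomain_coeff]

lemma ofNatCoeff_coeff_neg (γ : ℕ → g) {k : ℤ} (hk : k < 0) : (ofNatCoeff γ).coeff k = 0 := by
  rw [ofNatCoeff, HahnSeries.embDomain_notin_range]
  rintro ⟨m, hm⟩
  have : ((m : ℤ)) = k := hm
  omega

lemma negTail_mem_span (b : Module.Basis (Fin d) F g) (z : HahnSeries ℤ g)
    (hz : ∀ k : ℤ, 0 ≤ k → z.coeff k = 0) :
    ((z, 0) : LL g n) ∈ Submodule.span F
      ((Set.range fun p : ℕ × Fin d =>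
          ((HahnSeries.single (-(p.1 : ℤ) - 1) (b p.2), 0) : LL g n)) ∪
        {w : LL g n | w.1 = 0}) := by
  classical
  have hfin : z.support.Finite := by
    by_cases h0 : z = 0
    · simp [h0]
    · have hne : z.support.Nonempty := HahnSeries.support_nonempty_iff.2 h0
      refine Set.Finite.subset (Set.finite_Icc (z.isWF_support.min hne) (-1)) ?_
      intro a ha
      refine ⟨z.isWF_support.min_le hne ha, ?_⟩
      by_contra hge
      exact ha (hz a (by omega))
  have hzsum : z = ∑ m ∈ hfin.toFinset, HahnSeries.single m (z.coeff m) := by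
    ext k
    have : (∑ m ∈ hfin.toFinset, HahnSeries.single m (z.coeff m)).coeff k
        = ∑ m ∈ hfin.toFinset, (HahnSeries.single m (z.coeff m)).coeff k := by
      exact map_sum (HahnSeries.coeff.addMonoidHom k) _ _
    rw [this]
    by_cases hk : k ∈ hfin.toFinset
    · rw [Finset.sum_eq_single_of_mem k hk
        (fun m _ hne => HahnSeries.coeff_single_of_ne fun h => hne h.symm),
        HahnSeries.coeff_single_same]
    · have h1 : z.coeff k = 0 := by
        by_contra hc
        exact hk (hfin.mem_toFinset.2 hc)
      rw [h1, Finset.sum_eq_zero]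
      intro m hm
      apply HahnSeries.coeff_single_of_ne
      intro h
      exact hk (h ▸ hm)
  have key : ((z, 0) : LL g n)
      = ∑ m ∈ hfin.toFinset,
          (LinearMap.inl F (HahnSeries ℤ g) (Fin n → g)) (HahnSeries.single m (z.coeff m)) := by
    rw [← map_sum, ← hzsum]; rfl
  rw [key]
  refine Submodule.sum_mem _ fun m hm => ?_
  have hmneg : m < 0 := by
    have hms : m ∈ z.support := hfin.mem_toFinset.1 hm
    by_contra hge
    exact hms (hz m (by omega))
  have hrepr : ((HahnSeries.single m (z.coeff m), 0) : LL g n)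
      = ∑ i : Fin d, b.repr (z.coeff m) i •
          ((HahnSeries.single m (b i), 0) : LL g n) := by
    have h1 : HahnSeries.single m (z.coeff m)
        = ∑ i : Fin d, b.repr (z.coeff m) i • HahnSeries.single m (b i) := by
      have := b.sum_repr (z.coeff m)
      calc HahnSeries.single m (z.coeff m)
          = HahnSeries.single.linearMap (R := F) m (∑ i : Fin d, b.repr (z.coeff m) i • b i) := by
            rw [this]; rfl
        _ = ∑ i : Fin d, b.repr (z.coeff m) i • HahnSeries.single m (b i) := by
            rw [map_sum]
            refine Finset.sum_congr rfl fun i _ => ?_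
            rw [map_smul]; rfl
    refine Prod.ext ?_ ?_
    · rw [Prod.fst_sum]
      simpa using h1
    · rw [Prod.snd_sum]
      simp
  show ((HahnSeries.single m (z.coeff m), 0) : LL g n) ∈ _
  rw [hrepr]
  refine Submodule.sum_mem _ fun i _ => Submodule.smul_mem _ _ ?_
  refine Submodule.subset_span (Or.inl ⟨((-m - 1).toNat, i), ?_⟩)
  have hcast : (((-m - 1).toNat : ℤ)) = -m - 1 := Int.toNat_of_nonneg (by omega)
  simp only
  congr 1
  rw [hcast]
  ring

lemma span_eq_W1aux (b : Module.Basis (Fin d) F g) :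
    Submodule.span F
      ((Set.range fun p : ℕ × Fin d =>
          ((HahnSeries.single (-(p.1 : ℤ) - 1) (b p.2), 0) : LL g n)) ∪
        {z : LL g n | z.1 = 0}) = W1aux F g n := by
  apply le_antisymm
  · rw [Submodule.span_le]
    rintro z (⟨p, rfl⟩ | hz)
    · intro k hk
      simp only
      rw [HahnSeries.coeff_single_of_ne (by omega)]
    · intro k hk
      rw [Set.mem_setOf_eq] at hz
      rw [hz]
      rfl
  · intro z hz
    have hdec : z = (z.1, 0) + (0, z.2) := by
      refine Prod.ext ?_ ?_ <;> simp
    rw [hdec]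
    refine Submodule.add_mem _ (negTail_mem_span b z.1 hz) ?_
    exact Submodule.subset_span (Or.inr rfl)

/-- For `n ≥ 1`, the subspace
`W₁ = span{b_i(x⁻ᵏ,0), b_i(0,−1), b_i(0,−xˡ) : k ≥ 1, 1 ≤ l ≤ n−1}` — i.e. the span of
the strictly negative Laurent tails together with the whole truncated component
`{0} × g[x]/xⁿg[x]` — is a Lie subalgebra of `L(n,α₀)` complementary to the diagonal. -/
theorem stmt17 (n : ℕ) (hn : 1 ≤ n) (b : Module.Basis (Fin d) F g) (α₀ : F) :
    (∀ u ∈ Submodule.span F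
        ((Set.range fun p : ℕ × Fin d =>
            ((HahnSeries.single (-(p.1 : ℤ) - 1) (b p.2), 0) : LL g n)) ∪
          {z : LL g n | z.1 = 0}),
      ∀ v ∈ Submodule.span F
        ((Set.range fun p : ℕ × Fin d =>
            ((HahnSeries.single (-(p.1 : ℤ) - 1) (b p.2), 0) : LL g n)) ∪
          {z : LL g n | z.1 = 0}),
        bracketLL u v ∈ Submodule.span F
          ((Set.range fun p : ℕ × Fin d =>
              ((HahnSeries.single (-(p.1 : ℤ) - 1) (b p.2), 0) : LL g n)) ∪
            {z : LL g n | z.1 = 0})) ∧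
    IsCompl (Delta F g n)
      (Submodule.span F
        ((Set.range fun p : ℕ × Fin d =>
            ((HahnSeries.single (-(p.1 : ℤ) - 1) (b p.2), 0) : LL g n)) ∪
          {z : LL g n | z.1 = 0})) := by
  classical
  rw [span_eq_W1aux b]
  constructor
  · intro u hu v hv
    intro k hk
    letI := lieMulStruct g
    show (bracketLau u.1 v.1).coeff k = 0
    refine (HahnSeries.coeff_mul (R := g) (x := u.1) (y := v.1) (a := k)).trans ?_
    refine Finset.sum_eq_zero fun ij hij => ?_
    rw [Finset.mem_addAntidiagonal] at hij
    obtain ⟨h1, h2, h3⟩ := hij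
    have hi : ij.1 < 0 := by
      by_contra h
      exact h1 (hu ij.1 (by omega))
    have hj : ij.2 < 0 := by
      by_contra h
      exact h2 (hv ij.2 (by omega))
    omega
  · constructor
    · rw [Submodule.disjoint_def]
      intro z hzd hzw
      obtain ⟨h1, h2⟩ := hzd
      have hz1 : z.1 = 0 := by
        ext k
        rcases lt_or_ge k 0 with h | h
        · exact h1 k h
        · exact hzw k h
      refine Prod.ext hz1 ?_
      funext m
      rw [h2 m, hz1]
      rfl
    · rw [codisjoint_iff, eq_top_iff]
      intro z _
      rw [Submodule.mem_sup]
      set dEl : LL g n := (ofNatCoeff (fun ℓ => z.1.coeff (ℓ : ℤ)), fun m => z.1.coeff (m : ℤ))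
        with hdEl
      refine ⟨dEl, ?_, z - dEl, ?_, by abel⟩
      · refine ⟨fun k hk => ofNatCoeff_coeff_neg _ hk, fun m => ?_⟩
        exact (ofNatCoeff_coeff_nat (fun ℓ => z.1.coeff (ℓ : ℤ)) m).symm
      · intro k hk
        show (z.1 - dEl.1).coeff k = 0
        rw [HahnSeries.coeff_sub]
        have : dEl.1.coeff k = z.1.coeff k := by
          have hk' : ((k.toNat : ℤ)) = k := Int.toNat_of_nonneg hk
          rw [← hk', ofNatCoeff_coeff_nat]
        rw [this, sub_self]

end ManinCore
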